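/- Let B and C be strict bicategories and let F, G be lax functors from B to C such that all unit comparison 2-cells F.mapId b and G.mapId b are invertible. Suppose given, for every object b of B, a 1-cell σ_b : F.obj b ⟶ G.obj b, and, for every 1-cell k : b ⟶ b' of B, an invertible 2-cell τ_k : F.map k ≫ σ_{b'} ⟶ σ_b ≫ G.map k, such that for all composable 1-cells k : b ⟶ b' and k' : b' ⟶ b'' the compatibility with the composition comparisons holds: (F.map k ◁ τ_{k'}) ≫ (τ_k ▷ G.map k') ≫ (σ_b ◁ G.mapComp k k') = (F.mapComp k k' ▷ σ_{b''}) ≫ τ_{k ≫ k'} (written under the strict identifications). Then the unit compatibility holds automatically: for every object b, (F.mapId b ▷ σ_b) ≫ τ_{𝟙 b} = σ_b ◁ G.mapId b. (This is the paper's claim that for lax unitary quasi-functors with invertible interchange 2-cells the axiom ((1_B, K)) is redundant, carried out in the underlying horizontal 2-category.) -/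

import Mathlib

open CategoryTheory CategoryTheory.Bicategory

universe w₁ v₁ u₁ w₂ v₂ u₂

section
variable {C : Type u₂} [Bicategory.{w₂, v₂} C] [Bicategory.Strict C]

-- cancellation: whiskering on the right by g with 𝟙 ⟶ g iso is injective
lemma cancel_whiskerRight_of_iso {a c : C} {p q : a ⟶ c} (x y : p ⟶ q) {g : c ⟶ c}
    (v : 𝟙 c ⟶ g) [IsIso v] (h : x ▷ g = y ▷ g) : x = y := by
  have hx := whisker_exchange x v
  have hy := whisker_exchange y v
  rw [h] at hx
  rw [hx] at hy
  simp only [cancel_mono] at hy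
  simpa [Bicategory.whiskerRight_id, Bicategory.Strict.rightUnitor_eqToIso, cancel_mono, cancel_epi] using hy

end

/-- For lax functors `F G : B ⟶ C` between strict bicategories whose unit comparison
2-cells are invertible, a family of 1-cells `σ_b : F.obj b ⟶ G.obj b` together with
invertible 2-cells `τ_k : F.map k ≫ σ_{b'} ⟶ σ_b ≫ G.map k` compatible with the
composition comparison 2-cells is automatically compatible with the unit comparison
2-cells: `(F.mapId b ▷ σ b) ≫ τ (𝟙 b) = σ b ◁ G.mapId b` (written under the strict
identifications, realized by `eqToHom`). -/
theorem unit_compatibility_redundant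
    {B : Type u₁} [Bicategory.{w₁, v₁} B] [Bicategory.Strict B]
    {C : Type u₂} [Bicategory.{w₂, v₂} C] [Bicategory.Strict C]
    (F G : LaxFunctor B C)
    (hF : ∀ b : B, IsIso (F.mapId b)) (hG : ∀ b : B, IsIso (G.mapId b))
    (σ : ∀ b : B, F.obj b ⟶ G.obj b)
    (τ : ∀ {b b' : B} (k : b ⟶ b'), F.map k ≫ σ b' ⟶ σ b ≫ G.map k)
    (hτ : ∀ {b b' : B} (k : b ⟶ b'), IsIso (τ k))
    (hcomp : ∀ {b b' b'' : B} (k : b ⟶ b') (k' : b' ⟶ b''),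
      (F.map k ◁ τ k') ≫ eqToHom (by simp) ≫ (τ k ▷ G.map k') ≫ eqToHom (by simp) ≫
          (σ b ◁ G.mapComp k k') =
        eqToHom (by simp) ≫ (F.mapComp k k' ▷ σ b'') ≫ τ (k ≫ k')) :
    ∀ b : B, (F.mapId b ▷ σ b) ≫ τ (𝟙 b) = eqToHom (by simp) ≫ (σ b ◁ G.mapId b) := by
  intro b
  have hFi := hF b; have hGi := hG b; have hτi := @hτ
  -- unit identities in the strict setting
  have hcF : F.mapId b ▷ F.map (𝟙 b) ≫ F.mapComp (𝟙 b) (𝟙 b) = eqToHom (by simp) := by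
    have h := F.map₂_leftUnitor (𝟙 b)
    simp only [Bicategory.Strict.leftUnitor_eqToIso, eqToIso.inv, PrelaxFunctor.map₂_eqToHom] at h
    rw [eq_comm, eqToHom_comp_iff] at h
    simp [h, eqToHom_trans]
  have hcG : G.mapId b ▷ G.map (𝟙 b) ≫ G.mapComp (𝟙 b) (𝟙 b) = eqToHom (by simp) := by
    have h := G.map₂_leftUnitor (𝟙 b)
    simp only [Bicategory.Strict.leftUnitor_eqToIso, eqToIso.inv, PrelaxFunctor.map₂_eqToHom] at h
    rw [eq_comm, eqToHom_comp_iff] at h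
    simp [h, eqToHom_trans]
  have hcG' : G.map (𝟙 b) ◁ G.mapId b ≫ G.mapComp (𝟙 b) (𝟙 b) = eqToHom (by simp) := by
    have h := G.map₂_rightUnitor (𝟙 b)
    simp only [Bicategory.Strict.rightUnitor_eqToIso, eqToIso.inv, PrelaxFunctor.map₂_eqToHom] at h
    rw [eq_comm, eqToHom_comp_iff] at h
    simp [h, eqToHom_trans]
  -- G.mapComp (𝟙 b) (𝟙 b) is invertible
  have hcGiso : IsIso (G.mapComp (𝟙 b) (𝟙 b)) := by
    have : IsIso (G.map (𝟙 b) ◁ G.mapId b ≫ G.mapComp (𝟙 b) (𝟙 b)) := by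
      rw [hcG']; infer_instance
    exact IsIso.of_isIso_comp_left (G.map (𝟙 b) ◁ G.mapId b) _
  -- the composition compatibility at (𝟙 b, 𝟙 b)
  have hc := hcomp (𝟙 b) (𝟙 b)
  -- whisker hc with F.mapId b on the left
  have h1 := congrArg (fun z => (F.mapId b ▷ (F.map (𝟙 b) ≫ σ b)) ≫ z) hc
  rw [← whisker_exchange_assoc] at h1
  have hτeq : τ (𝟙 b ≫ 𝟙 b) = eqToHom (by simp) ≫ τ (𝟙 b) ≫ eqToHom (by simp) := by
    have key : ∀ (k : b ⟶ b) (hk : k = 𝟙 b), τ k =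
        eqToHom (by rw [hk]) ≫ τ (𝟙 b) ≫ eqToHom (by rw [hk]) := by
      rintro k rfl; simp
    exact key _ (by simp)
  rw [hτeq] at h1
  simp only [Bicategory.whiskerRight_comp, Bicategory.id_whiskerLeft,
    Bicategory.Strict.associator_eqToIso, Bicategory.Strict.leftUnitor_eqToIso,
    eqToIso.hom, eqToIso.inv, Category.assoc, eqToHom_trans, eqToHom_trans_assoc,
    eqToHom_refl, Category.id_comp, Category.comp_id] at h1
  rw [← Bicategory.comp_whiskerRight_assoc, ← Bicategory.comp_whiskerRight_assoc, hcF,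
    Bicategory.eqToHom_whiskerRight] at h1
  have : IsIso (τ (𝟙 b)) := hτi _
  rw [eqToHom_comp_iff] at h1
  simp only [eqToHom_trans_assoc, eqToHom_refl, Category.id_comp] at h1
  rw [cancel_epi] at h1
  rw [eqToHom_comp_iff] at h1
  -- h1 : (X ▷ G.map (𝟙 b)) ≫ eqToHom ≫ (σ b ◁ G.mapComp (𝟙 b) (𝟙 b)) = eqToHom ≫ eqToHom
  have hciso : IsIso (σ b ◁ G.mapComp (𝟙 b) (𝟙 b)) := inferInstance
  refine cancel_whiskerRight_of_iso _ _ (G.mapId b) ?_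
  rw [← cancel_mono (eqToHom (show (σ b ≫ G.map (𝟙 b)) ≫ G.map (𝟙 b) =
      σ b ≫ G.map (𝟙 b) ≫ G.map (𝟙 b) by simp) ≫ (σ b ◁ G.mapComp (𝟙 b) (𝟙 b)))]
  rw [h1]
  simp only [Bicategory.comp_whiskerRight, Bicategory.eqToHom_whiskerRight,
    Bicategory.whisker_assoc, Bicategory.Strict.associator_eqToIso, eqToIso.hom, eqToIso.inv,
    Category.assoc, eqToHom_trans, eqToHom_trans_assoc, eqToHom_refl, Category.id_comp,
    Category.comp_id]
  rw [← Bicategory.whiskerLeft_comp, hcG, Bicategory.whiskerLeft_eqToHom]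
  simp
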